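/- Let (E_n)_{n≥0} be defined by E_n = 1 + (M⁺_{n+1}+κ_n)/(λ_n M⁺_{n+1}+β_{n+1}κ_n) with all rate parameters strictly positive, M⁺_{n+1} = 1+μ_{n+1}+ν_{n+1}+β_{n+1}. If ∑_{n=0}^{∞} (M⁺_{n+1}+κ_n)/(λ_n M⁺_{n+1}+β_{n+1}κ_n) = ∞, then ∏_{k=0}^{n} E_k → ∞ as n → ∞; consequently any strictly positive solution of Reuter's equation for the one-sided alternating process satisfies y(n,b) → ∞, and the process is non-explosive. -/

import Mathlib

open Finset Filter

theorem stmt_14 (lam kap del mu nu bet : ℕ → ℝ)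
    (hlam : ∀ n, 0 < lam n) (hkap : ∀ n, 0 < kap n) (hdel : ∀ n, 0 < del n)
    (hmu : ∀ n, 1 ≤ n → 0 < mu n) (hmu0 : mu 0 = 0)
    (hnu : ∀ n, 1 ≤ n → 0 < nu n) (hnu0 : nu 0 = 0)
    (hbet : ∀ n, 0 < bet n)
    (Lp Mp : ℕ → ℝ)
    (hLp : ∀ n, Lp n = 1 + lam n + kap n + del n)
    (hMp : ∀ n, Mp n = 1 + mu n + nu n + bet n)
    (E : ℕ → ℝ)
    (hE : ∀ n, E n = 1 + (Mp (n + 1) + kap n) /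
      (lam n * Mp (n + 1) + bet (n + 1) * kap n))
    (hdiv : ¬ Summable (fun n : ℕ =>
      (Mp (n + 1) + kap n) / (lam n * Mp (n + 1) + bet (n + 1) * kap n))) :
    Filter.Tendsto (fun n : ℕ => ∏ k ∈ range (n + 1), E k) Filter.atTop Filter.atTop ∧
    ∀ yb yd : ℕ → ℝ, (∀ n, 0 < yb n) → (∀ n, 0 < yd n) →
      yd 0 * (1 + bet 0) = yb 0 * bet 0 →
      (∀ n, yb n * Lp n = yd n * del n + yb (n + 1) * lam n + yd (n + 1) * kap n) →
      (∀ n, yd (n + 1) * Mp (n + 1)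
        = yb (n + 1) * bet (n + 1) + yd n * mu (n + 1) + yb n * nu (n + 1)) →
      Filter.Tendsto yb Filter.atTop Filter.atTop := by
  set c : ℕ → ℝ := fun n : ℕ =>
      (Mp (n + 1) + kap n) / (lam n * Mp (n + 1) + bet (n + 1) * kap n) with hc
  have hMpos : ∀ n, 0 < Mp (n + 1) := by
    intro n
    rw [hMp]
    have h1 := hmu (n + 1) (by omega)
    have h2 := hnu (n + 1) (by omega)
    have h3 := hbet (n + 1)
    linarith
  have hD : ∀ n, 0 < lam n * Mp (n + 1) + bet (n + 1) * kap n := fun n =>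
    add_pos (mul_pos (hlam n) (hMpos n)) (mul_pos (hbet (n + 1)) (hkap n))
  have hcpos : ∀ n, 0 < c n := fun n =>
    div_pos (add_pos (hMpos n) (hkap n)) (hD n)
  have hEc : ∀ n, E n = 1 + c n := fun n => hE n
  have hEpos : ∀ n, 0 < E n := by
    intro n; rw [hEc n]; linarith [hcpos n]
  -- lower bound for the product
  have hprod_ge : ∀ m : ℕ, 1 + ∑ k ∈ range m, c k ≤ ∏ k ∈ range m, E k := by
    intro m
    induction m with
    | zero => simp
    | succ m ih =>
      rw [prod_range_succ, sum_range_succ, hEc m]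
      have hS : (0 : ℝ) ≤ ∑ k ∈ range m, c k :=
        sum_nonneg fun k _ => (hcpos k).le
      nlinarith [hcpos m, ih, hS]
  have hsum : Tendsto (fun n : ℕ => ∑ k ∈ range n, c k) atTop atTop :=
    (not_summable_iff_tendsto_nat_atTop_of_nonneg fun n => (hcpos n).le).mp hdiv
  have hpart1 : Tendsto (fun n : ℕ => ∏ k ∈ range (n + 1), E k) atTop atTop := by
    refine tendsto_atTop_mono (fun n => hprod_ge (n + 1)) ?_
    exact tendsto_atTop_add_const_left atTop 1 (hsum.comp (tendsto_add_atTop_nat 1))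
  refine ⟨hpart1, ?_⟩
  intro yb yd hyb hyd h0 h1 h2
  -- key algebraic identity
  have key : ∀ n, yb (n + 1) * (lam n * Mp (n + 1) + bet (n + 1) * kap n)
      = yb n * (lam n * Mp (n + 1) + bet (n + 1) * kap n + (Mp (n + 1) + kap n))
        + (yb n - yd n) * (del n * Mp (n + 1) + kap n * mu (n + 1)) := by
    intro n
    have e1 := h1 n
    have e2 := h2 n
    rw [hLp n] at e1
    rw [hMp (n + 1)] at e2 ⊢
    linear_combination (-(1 + mu (n + 1) + nu (n + 1) + bet (n + 1))) * e1 - kap n * e2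
  -- step lemma assuming yd n ≤ yb n
  have hstep : ∀ n, yd n ≤ yb n → yb n * E n ≤ yb (n + 1) := by
    intro n hdb
    have hpos2 : 0 < del n * Mp (n + 1) + kap n * mu (n + 1) :=
      add_pos (mul_pos (hdel n) (hMpos n)) (mul_pos (hkap n) (hmu (n + 1) (by omega)))
    have hmul : yb n * E n * (lam n * Mp (n + 1) + bet (n + 1) * kap n)
        ≤ yb (n + 1) * (lam n * Mp (n + 1) + bet (n + 1) * kap n) := by
      have heq : yb n * E n * (lam n * Mp (n + 1) + bet (n + 1) * kap n)
          = yb n * (lam n * Mp (n + 1) + bet (n + 1) * kap n + (Mp (n + 1) + kap n)) := by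
        have hDne : (lam n * Mp (n + 1) + bet (n + 1) * kap n) ≠ 0 := (hD n).ne'
        rw [hEc n]
        simp only [hc]
        rw [mul_assoc, add_mul, one_mul, div_mul_cancel₀ _ hDne]
      rw [heq, key n]
      nlinarith [mul_nonneg (sub_nonneg.2 hdb) hpos2.le]
    exact le_of_mul_le_mul_right hmul (hD n)
  -- yd n ≤ yb n for all n
  have hdb : ∀ n, yd n ≤ yb n := by
    intro n
    induction n with
    | zero => nlinarith [hyd 0, hbet 0]
    | succ n ih =>
      have hy1 : yb n ≤ yb (n + 1) := by
        have := hstep n ih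
        nlinarith [hyb n, hcpos n, hEc n]
      have e2 := h2 n
      rw [hMp (n + 1)] at e2
      have hm := hmu (n + 1) (by omega)
      have hn := hnu (n + 1) (by omega)
      nlinarith [hyb (n + 1), hyd (n + 1), hbet (n + 1), ih]
  have hstep' : ∀ n, yb n * E n ≤ yb (n + 1) := fun n => hstep n (hdb n)
  -- growth of yb along the product
  have hgrow : ∀ n, yb 0 * ∏ k ∈ range (n + 1), E k ≤ yb (n + 1) := by
    intro n
    induction n with
    | zero => simpa [prod_range_one] using hstep' 0
    | succ n ih =>
      rw [prod_range_succ, ← mul_assoc]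
      calc yb 0 * (∏ k ∈ range (n + 1), E k) * E (n + 1)
          ≤ yb (n + 1) * E (n + 1) :=
            mul_le_mul_of_nonneg_right ih (hEpos (n + 1)).le
        _ ≤ yb (n + 2) := hstep' (n + 1)
  rw [← tendsto_add_atTop_iff_nat 1]
  exact tendsto_atTop_mono hgrow (hpart1.const_mul_atTop (hyb 0))
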